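/- Let f : E → ℕ be an integral flow of G of value λ(λ + 1) satisfying f(e) ≤ λ + 1 for every critical edge e and f(e) ≤ λ for every non-critical edge e. Then there exist λ + 1 maximum (s,t)-flows f_1, …, f_{λ+1} of G (each f_j : E → {0,1} of value λ) such that f(e) = f_1(e) + f_2(e) + ⋯ + f_{λ+1}(e) for every edge e ∈ E. -/

import Mathlib

open Finset

/-- A finite directed multigraph on vertex type `V` with edge type `E`:
each edge `e` has a source `src e` and a target `tgt e`. -/
structure Digraph' (V E : Type) where
  src : E → V
  tgt : E → V

namespace Digraph'

variable {V E : Type} [Fintype V] [DecidableEq V] [Fintype E] [DecidableEq E]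

/-- `h : E → ℕ` satisfies flow conservation at every vertex other than `s` and `t`:
the sum over incoming edges equals the sum over outgoing edges. -/
def Conserves (G : Digraph' V E) (s t : V) (h : E → ℕ) : Prop :=
  ∀ v : V, v ≠ s → v ≠ t →
    ∑ e ∈ univ.filter (fun e => G.tgt e = v), h e =
      ∑ e ∈ univ.filter (fun e => G.src e = v), h e

/-- The value of `h`: the net flow out of `s`. -/
def flowValue (G : Digraph' V E) (s : V) (h : E → ℕ) : ℤ :=
  (∑ e ∈ univ.filter (fun e => G.src e = s), (h e : ℤ)) -
    ∑ e ∈ univ.filter (fun e => G.tgt e = s), (h e : ℤ)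

/-- An `(s,t)`-flow of a unit-capacity digraph: a `{0,1}`-valued function on edges
satisfying flow conservation at every vertex other than `s` and `t`. -/
def IsFlow (G : Digraph' V E) (s t : V) (f : E → ℕ) : Prop :=
  (∀ e, f e ≤ 1) ∧ G.Conserves s t f

/-- One step along an edge not belonging to `F`. -/
def stepAvoid (G : Digraph' V E) (F : Finset E) (u v : V) : Prop :=
  ∃ e, e ∉ F ∧ G.src e = u ∧ G.tgt e = v

/-- Reachability by a directed path using no edge of `F`. -/
def ReachAvoid (G : Digraph' V E) (F : Finset E) : V → V → Prop :=
  Relation.ReflTransGen (G.stepAvoid F)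

/-- `C` is an `(s,t)`-cut: after deleting the edges of `C` there is no directed
path from `s` to `t`. -/
def IsCut (G : Digraph' V E) (s t : V) (C : Finset E) : Prop :=
  ¬ G.ReachAvoid C s t

/-- An `(s,t)`-min-cut: an `(s,t)`-cut of minimum cardinality. -/
def IsMinCut (G : Digraph' V E) (s t : V) (C : Finset E) : Prop :=
  G.IsCut s t C ∧ ∀ C' : Finset E, G.IsCut s t C' → C.card ≤ C'.card

/-- A minimal `(s,t)`-cut: no proper subset of it is an `(s,t)`-cut. -/
def IsMinimalCut (G : Digraph' V E) (s t : V) (C : Finset E) : Prop :=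
  G.IsCut s t C ∧ ∀ C' : Finset E, C' ⊂ C → ¬ G.IsCut s t C'

/-- An edge is critical if it belongs to some `(s,t)`-min-cut. -/
def Critical (G : Digraph' V E) (s t : V) (e : E) : Prop :=
  ∃ C : Finset E, G.IsMinCut s t C ∧ e ∈ C

/-- `m` is the maximum `(s,t)`-flow value of `G − F`, i.e. the largest value of an
`(s,t)`-flow of `G` vanishing on every edge of `F`. -/
def IsMaxFlowValue (G : Digraph' V E) (s t : V) (F : Finset E) (m : ℤ) : Prop :=
  (∃ f, G.IsFlow s t f ∧ (∀ e ∈ F, f e = 0) ∧ G.flowValue s f = m) ∧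
    ∀ f, G.IsFlow s t f → (∀ e ∈ F, f e = 0) → G.flowValue s f ≤ m

/-- The residual graph `G_f` of a `{0,1}`-flow `f`: each edge with `f e = 1`
is reversed, each edge with `f e = 0` is kept as is. -/
def residual (G : Digraph' V E) (f : E → ℕ) : Digraph' V E where
  src e := if f e = 1 then G.tgt e else G.src e
  tgt e := if f e = 1 then G.src e else G.tgt e

end Digraph'



namespace FlowSplit

open Finset

variable {V E : Type} [Fintype V] [DecidableEq V] [Fintype E] [DecidableEq E]

def inS (tgt : E → V) (h : E → ℕ) (v : V) : ℕ :=
  ∑ e ∈ univ.filter (fun e => tgt e = v), h e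

def Circ (src tgt : E → V) (h : E → ℕ) : Prop := ∀ v, inS tgt h v = inS src h v

def CircZ (src tgt : E → V) (σ : E → ℤ) : Prop :=
  ∀ v, ∑ e ∈ univ.filter (fun e => tgt e = v), σ e
     = ∑ e ∈ univ.filter (fun e => src e = v), σ e

def mid (h : E → ℕ) (k : ℕ) : Finset E := univ.filter (fun e => 0 < h e ∧ h e < k)

lemma mem_mid {h : E → ℕ} {k : ℕ} {e : E} : e ∈ mid h k ↔ 0 < h e ∧ h e < k := by simp [mid]

variable {src tgt : E → V}

lemma inS_mod {h : E → ℕ} {k : ℕ} (hb : ∀ e, h e ≤ k) (e0 : E)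
    (hall : ∀ e', e' ∈ mid h k → (src e' = v ∨ tgt e' = v) → e' = e0) (dir : E → V) 
    (hdir : ∀ e, dir e = src e ∨ dir e = tgt e) :
    inS dir h v % k = (if dir e0 = v then h e0 % k else 0) % k := by
  unfold inS
  rw [Finset.sum_nat_mod]
  have : ∀ e ∈ univ.filter (fun e => dir e = v), h e % k = if e0 = e then h e0 % k else 0 := by
    intro e he
    simp only [mem_filter, mem_univ, true_and] at he
    by_cases hee : e0 = e
    · simp [hee]
    · rw [if_neg hee]
      have hem : e ∉ mid h k := by
        intro hm
        exact hee (hall e hm (by rcases hdir e with h1 | h1 <;> rw [h1] at he <;> simp [he])).symm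
      rw [mem_mid] at hem
      push_neg at hem
      rcases Nat.eq_zero_or_pos (h e) with h0 | h0
      · simp [h0]
      · have : h e = k := le_antisymm (hb e) (hem h0)
        simp [this]
  rw [Finset.sum_congr rfl this, Finset.sum_ite_eq]
  simp only [mem_filter, mem_univ, true_and]

lemma exists_other_middle {h : E → ℕ} {k : ℕ} (hc : Circ src tgt h) (hb : ∀ e, h e ≤ k)
    {e0 : E} (he0 : e0 ∈ mid h k) (hnl : src e0 ≠ tgt e0) {v : V}
    (hinc : src e0 = v ∨ tgt e0 = v) :
    ∃ e', e' ∈ mid h k ∧ e' ≠ e0 ∧ (src e' = v ∨ tgt e' = v) := by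
  by_contra hcon
  push_neg at hcon
  have hall : ∀ e', e' ∈ mid h k → (src e' = v ∨ tgt e' = v) → e' = e0 := by
    intro e' hm hi
    by_contra hne
    rcases hcon e' hm hne with ⟨h1, h2⟩
    rcases hi with h | h
    · exact h1 h
    · exact h2 h
  have h1 := inS_mod hb e0 hall tgt (fun e => Or.inr rfl)
  have h2 := inS_mod hb e0 hall src (fun e => Or.inl rfl)
  rw [hc v] at h1
  rw [h2] at h1
  rw [mem_mid] at he0
  have hk0 : h e0 % k = 0 := by
    rcases hinc with hs | ht
    · rw [if_pos hs, if_neg (fun htg => hnl (hs.trans htg.symm)),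
        Nat.mod_mod_of_dvd _ dvd_rfl, Nat.zero_mod] at h1
      exact h1
    · rw [if_pos ht, if_neg (fun hsr => hnl (hsr.trans ht.symm)),
        Nat.mod_mod_of_dvd _ dvd_rfl, Nat.zero_mod] at h1
      exact h1.symm
  have := Nat.le_of_dvd he0.1 (Nat.dvd_of_mod_eq_zero hk0)
  omega

def wfrom (src tgt : E → V) (x : E × Bool) : V := if x.2 then src x.1 else tgt x.1
def wto (src tgt : E → V) (x : E × Bool) : V := if x.2 then tgt x.1 else src x.1

lemma exists_sigma {h : E → ℕ} {k : ℕ} (hc : Circ src tgt h) (hb : ∀ e, h e ≤ k)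
    (hne : (mid h k).Nonempty) :
    ∃ σ : E → ℤ, (∀ e, σ e = 1 ∨ σ e = 0 ∨ σ e = -1) ∧
      (∀ e, σ e ≠ 0 → e ∈ mid h k) ∧ (∃ e, σ e ≠ 0) ∧ CircZ src tgt σ := by
  classical
  by_cases hloop : ∃ e1 ∈ mid h k, src e1 = tgt e1
  · obtain ⟨e1, he1, hl1⟩ := hloop
    refine ⟨fun e => if e1 = e then 1 else 0, ?_, ?_, ⟨e1, by simp⟩, ?_⟩
    · intro e; by_cases h : e1 = e <;> simp [h]
    · intro e hh; by_cases h : e1 = e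
      · exact h ▸ he1
      · simp [h] at hh
    · intro v
      rw [Finset.sum_ite_eq, Finset.sum_ite_eq]
      simp only [mem_filter, mem_univ, true_and, hl1]
  · push_neg at hloop
    obtain ⟨e0, he0⟩ := hne
    have hdeg : ∀ x : {x : E × Bool // x.1 ∈ mid h k},
        ∃ e', e' ∈ mid h k ∧ e' ≠ x.1.1 ∧ (src e' = wto src tgt x.1 ∨ tgt e' = wto src tgt x.1) := by
      intro x
      refine exists_other_middle hc hb x.2 (hloop _ x.2) ?_
      by_cases hd : x.1.2
      · right; simp [wto, hd]
      · left; simp only [Bool.not_eq_true] at hd; simp [wto, hd]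
    choose nf hnf1 hnf2 hnf3 using hdeg
    obtain ⟨nxt, hne1, hne2⟩ : ∃ nxt : {x : E × Bool // x.1 ∈ mid h k} → {x : E × Bool // x.1 ∈ mid h k},
        (∀ x, (nxt x).1.1 ≠ x.1.1) ∧ (∀ x, wfrom src tgt (nxt x).1 = wto src tgt x.1) := by
      refine ⟨fun x => ⟨(nf x, if src (nf x) = wto src tgt x.1 then true else false), hnf1 x⟩, fun x => hnf2 x, fun x => ?_⟩
      by_cases hs : src (nf x) = wto src tgt x.1
      · simp [wfrom, hs]
      · rcases hnf3 x with h1 | h1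
        · exact absurd h1 hs
        · simp [wfrom, hs, h1]
    obtain ⟨w, hw0, hwsucc⟩ : ∃ w : ℕ → {x : E × Bool // x.1 ∈ mid h k},
        w 0 = ⟨(e0, true), he0⟩ ∧ ∀ n, w (n + 1) = nxt (w n) :=
      ⟨fun n => Nat.rec ⟨(e0, true), he0⟩ (fun _ ih => nxt ih) n, rfl, fun n => rfl⟩
    set p : ℕ → V := fun n => wfrom src tgt (w n).1 with hp
    have hmidw : ∀ n, (w n).1.1 ∈ mid h k := fun n => (w n).2
    have hchain : ∀ n, p (n + 1) = wto src tgt (w n).1 := by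
      intro n
      rw [hp]
      simp only [hwsucc n]
      exact hne2 (w n)
    have hedne : ∀ n, (w (n + 1)).1.1 ≠ (w n).1.1 := by
      intro n; rw [hwsucc n]; exact hne1 (w n)
    have hends : ∀ n, (p n = src (w n).1.1 ∧ p (n+1) = tgt (w n).1.1) ∨
        (p n = tgt (w n).1.1 ∧ p (n+1) = src (w n).1.1) := by
      intro n
      rw [hchain n, hp]
      by_cases hd : (w n).1.2
      · left; constructor <;> simp [wfrom, wto, hd]
      · right; simp only [Bool.not_eq_true] at hd; constructor <;> simp [wfrom, wto, hd]
    -- pigeonhole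
    obtain ⟨a, b, hab, hpab⟩ := Finite.exists_ne_map_eq_of_infinite p
    have hex : ∃ m, ∃ i', i' < m ∧ p i' = p m := by
      rcases Nat.lt_or_ge a b with hlt | hge
      · exact ⟨b, a, hlt, hpab⟩
      · exact ⟨a, b, lt_of_le_of_ne hge (Ne.symm hab), hpab.symm⟩
    set j0 := Nat.find hex with hj0
    obtain ⟨i0, hi0lt, hpi0⟩ := Nat.find_spec hex
    have hinj : ∀ a b, a < b → b < j0 → p a ≠ p b := by
      intro a b h1 h2 heq
      exact Nat.find_min hex h2 ⟨a, h1, heq⟩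
    -- each edge used at most once in [i0, j0)
    have haux : ∀ l l', l < l' → l' < j0 → (w l).1.1 ≠ (w l').1.1 := by
      intro l l' hll' hl'j heq
      have h1 := hends l
      have h2 := hends l'
      rw [← heq] at h2
      have hpll' : p l ≠ p l' := hinj l l' hll' hl'j
      have hpl1 : p l' = p (l + 1) := by
        rcases h1 with ⟨ha1, ha2⟩ | ⟨ha1, ha2⟩ <;> rcases h2 with ⟨hb1, hb2⟩ | ⟨hb1, hb2⟩
        · exact absurd (ha1.trans hb1.symm) hpll'
        · exact hb1.trans ha2.symm
        · exact hb1.trans ha2.symm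
        · exact absurd (ha1.trans hb1.symm) hpll'
      have hl1 : l + 1 ≤ l' := hll'
      rcases eq_or_lt_of_le hl1 with heq1 | hlt1
      · exact hedne l (by rw [heq1, heq])
      · exact hinj (l + 1) l' hlt1 hl'j hpl1.symm
    -- define sigma
    set σ : E → ℤ := fun e => ∑ l ∈ Finset.Ico i0 j0,
      (if (w l).1.1 = e then (if (w l).1.2 then (1 : ℤ) else -1) else 0) with hσ
    have hS : ∀ e, (Finset.Ico i0 j0).filter (fun l => (w l).1.1 = e) = ∅ ∨
        ∃ l, (Finset.Ico i0 j0).filter (fun l => (w l).1.1 = e) = {l} := by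
      intro e
      set S := (Finset.Ico i0 j0).filter (fun l => (w l).1.1 = e) with hSdef
      have hcard : ∀ a ∈ S, ∀ b ∈ S, a = b := by
        intro a ha b hb
        simp only [hSdef, mem_filter, Finset.mem_Ico] at ha hb
        rcases lt_trichotomy a b with hlt | heq | hlt
        · exact absurd (ha.2.trans hb.2.symm) (haux a b hlt hb.1.2)
        · exact heq
        · exact absurd (hb.2.trans ha.2.symm) (haux b a hlt ha.1.2)
      rcases S.eq_empty_or_nonempty with h | ⟨l, hl⟩
      · exact Or.inl h
      · exact Or.inr ⟨l, Finset.eq_singleton_iff_unique_mem.mpr ⟨hl, fun b hb => hcard b hb l hl⟩⟩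
    have hσfilter : ∀ e, σ e = ∑ l ∈ (Finset.Ico i0 j0).filter (fun l => (w l).1.1 = e),
        (if (w l).1.2 then (1 : ℤ) else -1) := by
      intro e
      rw [hσ, Finset.sum_filter]
    have hσval : ∀ e, σ e = 1 ∨ σ e = 0 ∨ σ e = -1 := by
      intro e
      rw [hσfilter e]
      rcases hS e with hemp | ⟨l, hsing⟩
      · rw [hemp]; simp
      · rw [hsing, Finset.sum_singleton]
        by_cases hd : (w l).1.2 <;> simp [hd]
    have hσsupp : ∀ e, σ e ≠ 0 → e ∈ mid h k := by
      intro e hne2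
      by_contra hem
      apply hne2
      rw [hσ]
      apply Finset.sum_eq_zero
      intro l _
      rw [if_neg]
      intro heq; exact hem (heq ▸ hmidw l)
    have hσne : σ ((w i0).1.1) ≠ 0 := by
      rw [hσfilter]
      rcases hS ((w i0).1.1) with hemp | ⟨l, hsing⟩
      · exfalso
        have : i0 ∈ (Finset.Ico i0 j0).filter (fun l => (w l).1.1 = (w i0).1.1) := by
          simp [Finset.mem_Ico, hi0lt, hj0]
        rw [hemp] at this; simp at this
      · rw [hsing, Finset.sum_singleton]
        by_cases hd : (w l).1.2 <;> simp [hd]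
    refine ⟨σ, hσval, hσsupp, ⟨_, hσne⟩, ?_⟩
    -- conservation
    intro v
    have hswap : ∀ dir : E → V, ∑ e ∈ univ.filter (fun e => dir e = v), σ e
        = ∑ l ∈ Finset.Ico i0 j0, (if dir ((w l).1.1) = v then (if (w l).1.2 then (1:ℤ) else -1) else 0) := by
      intro dir
      simp only [hσ]
      rw [Finset.sum_comm]
      apply Finset.sum_congr rfl
      intro l _
      rw [Finset.sum_ite_eq]
      simp only [mem_filter, mem_univ, true_and]
    rw [hswap tgt, hswap src, ← sub_eq_zero, ← Finset.sum_sub_distrib]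
    have hterm : ∀ l, (if tgt ((w l).1.1) = v then (if (w l).1.2 then (1:ℤ) else -1) else 0)
        - (if src ((w l).1.1) = v then (if (w l).1.2 then (1:ℤ) else -1) else 0)
        = (if p (l+1) = v then (1:ℤ) else 0) - (if p l = v then (1:ℤ) else 0) := by
      intro l
      have hch := hchain l
      rw [hch, hp]
      by_cases hd : (w l).1.2
      · simp only [hd, if_true, wto, wfrom]
      · simp only [Bool.not_eq_true] at hd
        simp only [hd, wto, wfrom]
        by_cases h1 : tgt ((w l).1.1) = v <;> by_cases h2 : src ((w l).1.1) = v <;>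
          simp [h1, h2]
    rw [Finset.sum_congr rfl (fun l _ => hterm l)]
    rw [Finset.sum_Ico_eq_sum_range]
    have : ∀ l, (if p (i0 + l + 1) = v then (1:ℤ) else 0) - (if p (i0 + l) = v then (1:ℤ) else 0)
        = (fun m => if p (i0 + m) = v then (1:ℤ) else 0) (l + 1) - (fun m => if p (i0 + m) = v then (1:ℤ) else 0) l := by
      intro l; simp only []; rw [Nat.add_assoc]
    rw [Finset.sum_congr rfl (fun l _ => this l), Finset.sum_range_sub (fun m => if p (i0 + m) = v then (1:ℤ) else 0)]
    rw [Nat.add_zero, Nat.add_sub_cancel' (le_of_lt hi0lt), hpi0]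
    ring
/-- pushing along the cycle: reduces the number of middle edges, preserves
circulation, bounds, tight and zero edges. -/
lemma push {h : E → ℕ} {k : ℕ} (hc : Circ src tgt h) (hb : ∀ e, h e ≤ k)
    (hne : (mid h k).Nonempty) :
    ∃ h' : E → ℕ, Circ src tgt h' ∧ (∀ e, h' e ≤ k) ∧
      (mid h' k).card < (mid h k).card ∧
      (∀ e, h e = k → h' e = k) ∧ (∀ e, h e = 0 → h' e = 0) := by
  classical
  obtain ⟨σ, hval, hsupp, ⟨ew, hew⟩, hcz⟩ := exists_sigma hc hb hne
  set T : Finset E := univ.filter (fun e => σ e ≠ 0) with hT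
  have hTne : T.Nonempty := ⟨ew, by simp [hT, hew]⟩
  set slack : E → ℕ := fun e => if σ e = 1 then k - h e else h e with hslack
  set c : ℕ := (T.image slack).min' (hTne.image slack) with hcdef
  have hc_le : ∀ e ∈ T, c ≤ slack e := fun e he =>
    Finset.min'_le _ _ (Finset.mem_image_of_mem slack he)
  have hc_pos : 1 ≤ c := by
    rw [hcdef]
    apply Finset.le_min'
    intro y hy
    obtain ⟨e, heT, hye⟩ := Finset.mem_image.mp hy
    have hm := hsupp e (by simpa [hT] using heT)
    rw [mem_mid] at hm
    rw [← hye, hslack]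
    by_cases h1 : σ e = 1 <;> simp [h1] <;> omega
  set h' : E → ℕ := fun e => if σ e = 1 then h e + c else if σ e = -1 then h e - c else h e with hh'
  have hcle : ∀ e, σ e = 1 → c ≤ k - h e := by
    intro e h1
    have := hc_le e (by simp [hT, h1])
    simpa [hslack, h1] using this
  have hcle' : ∀ e, σ e = -1 → c ≤ h e := by
    intro e h1
    have := hc_le e (by simp [hT, h1])
    simpa [hslack, h1] using this
  have hmide : ∀ e, σ e ≠ 0 → (0 < h e ∧ h e < k) := fun e he => mem_mid.mp (hsupp e he)
  have hcast : ∀ e, (h' e : ℤ) = (h e : ℤ) + σ e * (c : ℤ) := by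
    intro e
    rcases hval e with h1 | h1 | h1
    · simp only [hh', h1]
      norm_num
    · simp [hh', h1]
    · simp only [hh', h1]
      norm_num
      rw [Nat.cast_sub (hcle' e h1)]
      ring
  have hb' : ∀ e, h' e ≤ k := by
    intro e
    rcases hval e with h1 | h1 | h1
    · have h2 := hcle e h1
      have h3 := (hmide e (by rw [h1]; exact one_ne_zero)).2
      simp only [hh', h1]
      norm_num
      omega
    · simp [hh', h1, hb e]
    · simp only [hh', h1]
      norm_num
      have := hb e; omega
  have hc' : Circ src tgt h' := by
    intro v
    have hz : ∀ dir : E → V, (∑ e ∈ univ.filter (fun e => dir e = v), (h' e : ℤ))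
        = (∑ e ∈ univ.filter (fun e => dir e = v), (h e : ℤ))
          + (∑ e ∈ univ.filter (fun e => dir e = v), σ e) * (c : ℤ) := by
      intro dir
      rw [Finset.sum_mul, ← Finset.sum_add_distrib]
      exact Finset.sum_congr rfl (fun e _ => hcast e)
    have hnat : ∀ dir : E → V, ((inS dir h' v : ℕ) : ℤ)
        = ∑ e ∈ univ.filter (fun e => dir e = v), (h' e : ℤ) := by
      intro dir; rw [inS]; push_cast; ring
    have hnat2 : ∀ dir : E → V, ((inS dir h v : ℕ) : ℤ)
        = ∑ e ∈ univ.filter (fun e => dir e = v), (h e : ℤ) := by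
      intro dir; rw [inS]; push_cast; ring
    have : ((inS tgt h' v : ℕ) : ℤ) = ((inS src h' v : ℕ) : ℤ) := by
      rw [hnat, hnat, hz, hz, hcz v]
      have := hc v
      rw [← hnat2 tgt, ← hnat2 src, this]
    exact_mod_cast this
  have hkeep : ∀ e, e ∉ mid h k → h' e = h e := by
    intro e he
    have : σ e = 0 := by
      by_contra hs; exact he (hsupp e hs)
    simp [hh', this]
  have hsub : mid h' k ⊆ mid h k := by
    intro e he
    by_contra hem
    rw [mem_mid] at he
    rw [hkeep e hem] at he
    exact hem (mem_mid.mpr he)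
  -- the argmin edge leaves the middle
  have hstrict : ∃ e, e ∈ mid h k ∧ e ∉ mid h' k := by
    have hcmem : c ∈ T.image slack := Finset.min'_mem _ _
    obtain ⟨e, heT, hse⟩ := Finset.mem_image.mp hcmem
    have hsne : σ e ≠ 0 := by simpa [hT] using heT
    refine ⟨e, hsupp e hsne, ?_⟩
    rw [mem_mid]
    rcases hval e with h1 | h1 | h1
    · simp only [hslack, h1] at hse
      norm_num at hse
      have h3 := (hmide e hsne).2
      simp only [hh', h1]
      norm_num
      omega
    · exact absurd h1 hsne
    · simp only [hslack, h1] at hse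
      norm_num at hse
      simp only [hh', h1]
      norm_num
      omega
  obtain ⟨e, hem, hem'⟩ := hstrict
  refine ⟨h', hc', hb', Finset.card_lt_card ⟨hsub, fun hsup => hem' (hsup hem)⟩, ?_, ?_⟩
  · intro e' he'
    rw [hkeep e' (by rw [mem_mid]; omega), he']
  · intro e' he'
    rw [hkeep e' (by rw [mem_mid]; omega), he']
/-- extraction of one binary circulation containing all tight edges and
avoiding all zero edges -/
lemma extract {k : ℕ} (hk : 1 ≤ k) :
    ∀ n (h : E → ℕ), (mid h k).card ≤ n → Circ src tgt h → (∀ e, h e ≤ k) →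
    ∃ g : E → ℕ, (∀ e, g e ≤ 1) ∧ Circ src tgt g ∧
      (∀ e, h e = k → g e = 1) ∧ (∀ e, h e = 0 → g e = 0) := by
  intro n
  induction n with
  | zero =>
    intro h hcard hc hb
    have hmide : ∀ e, h e = 0 ∨ h e = k := by
      intro e
      have : e ∉ mid h k := by
        intro hm
        rw [Finset.card_eq_zero.mp (Nat.le_zero.mp hcard)] at hm
        exact absurd hm (Finset.notMem_empty e)
      rw [mem_mid] at this
      have := hb e
      omega
    refine ⟨fun e => if h e = k then 1 else 0, ?_, ?_, ?_, ?_⟩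
    · intro e; by_cases h1 : h e = k <;> simp [h1]
    · intro v
      have key : ∀ dir : E → V, inS dir h v = k * inS dir (fun e => if h e = k then 1 else 0) v := by
        intro dir
        rw [inS, inS, Finset.mul_sum]
        apply Finset.sum_congr rfl
        intro e _
        rcases hmide e with h1 | h1
        · simp [h1, (show ¬(0 = k) by omega)]
        · simp [h1]
      have := hc v
      rw [key tgt, key src] at this
      exact Nat.eq_of_mul_eq_mul_left (by omega) this
    · intro e h1; simp [h1]
    · intro e h1; simp [h1]; omega
  | succ n ih =>
    intro h hcard hc hb
    rcases (mid h k).eq_empty_or_nonempty with hemp | hne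
    · exact ih h (by rw [hemp]; simp) hc hb
    · obtain ⟨h', hc', hb', hlt, hkk, h00⟩ := push hc hb hne
      obtain ⟨g, hg1, hg2, hg3, hg4⟩ := ih h' (by omega) hc' hb'
      exact ⟨g, hg1, hg2, fun e he => hg3 e (hkk e he), fun e he => hg4 e (h00 e he)⟩

/-- decomposition of a circulation bounded by `k` into `k` binary circulations -/
lemma decomp : ∀ (k : ℕ) (h : E → ℕ), Circ src tgt h → (∀ e, h e ≤ k) →
    ∃ g : Fin k → E → ℕ, (∀ j e, g j e ≤ 1) ∧ (∀ j, Circ src tgt (g j)) ∧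
      (∀ e, h e = ∑ j, g j e) := by
  intro k
  induction k with
  | zero =>
    intro h _ hb
    exact ⟨fun j => j.elim0, fun j => j.elim0, fun j => j.elim0,
      fun e => by simpa using Nat.le_zero.mp (hb e)⟩
  | succ k ih =>
    intro h hc hb
    obtain ⟨g0, hg1, hg2, hg3, hg4⟩ :=
      extract (Nat.succ_le_succ (Nat.zero_le k)) (mid h (k+1)).card h le_rfl hc hb
    have hg0le : ∀ e, g0 e ≤ h e := by
      intro e
      rcases Nat.eq_zero_or_pos (h e) with h1 | h1
      · rw [hg4 e h1, h1]
      · exact le_trans (hg1 e) h1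
    set h1 : E → ℕ := fun e => h e - g0 e with hh1
    have hadd : ∀ e, h1 e + g0 e = h e := by
      intro e
      have := hg0le e
      simp only [hh1]
      omega
    have hc1 : Circ src tgt h1 := by
      intro v
      have key : ∀ dir : E → V, inS dir h v = inS dir h1 v + inS dir g0 v := by
        intro dir
        rw [inS, inS, inS, ← Finset.sum_add_distrib]
        exact Finset.sum_congr rfl (fun e _ => by rw [hadd e])
      have := hc v
      rw [key tgt, key src, hg2 v] at this
      omega
    have hb1 : ∀ e, h1 e ≤ k := by
      intro e
      simp only [hh1]
      by_cases he : h e = k + 1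
      · rw [hg3 e he, he]
        omega
      · have := hb e; omega
    obtain ⟨G, hG1, hG2, hG3⟩ := ih h1 hc1 hb1
    refine ⟨Fin.cons g0 G, ?_, ?_, ?_⟩
    · intro j e
      refine Fin.cases ?_ ?_ j
      · simpa using hg1 e
      · intro i; simpa using hG1 i e
    · intro j
      refine Fin.cases ?_ ?_ j
      · simpa using hg2
      · intro i; simpa using hG2 i
    · intro e
      rw [Fin.sum_univ_succ]
      simp only [Fin.cons_zero, Fin.cons_succ]
      rw [← hG3 e]
      simp only [hh1]
      have := hg0le e
      omega
end FlowSplit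

/-- Let `f : E → ℕ` be an integral flow of `G` of value `λ(λ+1)`
with `f e ≤ λ+1` for critical edges and `f e ≤ λ` for non-critical edges. Then there
are `λ+1` maximum `(s,t)`-flows `f_1, …, f_{λ+1}` of `G` (each `{0,1}`-valued of
value `λ`) with `f e = f_1 e + ⋯ + f_{λ+1} e` for every edge `e`. -/
theorem stmt7 {V E : Type} [Fintype V] [DecidableEq V] [Fintype E] [DecidableEq E]
    (G : Digraph' V E) (s t : V) (hst : s ≠ t) (lam : ℕ)
    (hmax : G.IsMaxFlowValue s t ∅ lam)
    (f : E → ℕ) (hcons : G.Conserves s t f)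
    (hval : G.flowValue s f = lam * (lam + 1))
    (hbd : ∀ e, (G.Critical s t e → f e ≤ lam + 1) ∧ (¬ G.Critical s t e → f e ≤ lam)) :
    ∃ F : Fin (lam + 1) → E → ℕ,
      (∀ j, G.IsFlow s t (F j) ∧ G.flowValue s (F j) = lam) ∧
      ∀ e, f e = ∑ j, F j e := by
  classical
  have fall : ∀ e, f e ≤ lam + 1 := by
    intro e
    by_cases hcrit : G.Critical s t e
    · exact (hbd e).1 hcrit
    · exact le_trans ((hbd e).2 hcrit) (Nat.le_succ lam)
  set N : ℕ := lam * (lam + 1) with hN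
  set src' : E ⊕ Fin N → V := Sum.elim G.src (fun _ => t) with hsrc'
  set tgt' : E ⊕ Fin N → V := Sum.elim G.tgt (fun _ => s) with htgt'
  set h' : E ⊕ Fin N → ℕ := Sum.elim f (fun _ => 1) with hh'
  have split : ∀ (F : E ⊕ Fin N → ℕ) (d : E → V) (c v : V),
      ∑ x ∈ univ.filter (fun x => Sum.elim d (fun _ : Fin N => c) x = v), F x
      = (∑ e ∈ univ.filter (fun e => d e = v), F (Sum.inl e))
        + (if c = v then ∑ j : Fin N, F (Sum.inr j) else 0) := by
    intro F d c v
    rw [Finset.sum_filter, Fintype.sum_sum_type, ← Finset.sum_filter]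
    congr 1
    by_cases hcv : c = v
    · simp [hcv]
    · simp [hcv]
  -- the natural sums as integers at each vertex
  have hZcons : ∀ v : V, v ≠ s → v ≠ t →
      (∑ e ∈ univ.filter (fun e => G.tgt e = v), (f e : ℤ))
      = ∑ e ∈ univ.filter (fun e => G.src e = v), (f e : ℤ) := by
    intro v h1 h2
    exact_mod_cast hcons v h1 h2
  have hss : (∑ e ∈ univ.filter (fun e => G.src e = s), (f e : ℤ))
      = (∑ e ∈ univ.filter (fun e => G.tgt e = s), (f e : ℤ)) + N := by
    have hflow := hval
    rw [Digraph'.flowValue] at hflow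
    rw [hN]; push_cast; linarith
  have hts : (∑ e ∈ univ.filter (fun e => G.tgt e = t), (f e : ℤ))
      = (∑ e ∈ univ.filter (fun e => G.src e = t), (f e : ℤ)) + N := by
    set D : V → ℤ := fun v => (∑ e ∈ univ.filter (fun e => G.tgt e = v), (f e : ℤ))
      - ∑ e ∈ univ.filter (fun e => G.src e = v), (f e : ℤ) with hD
    have hDsum : ∑ v : V, D v = 0 := by
      simp only [hD]
      rw [Finset.sum_sub_distrib]
      rw [Finset.sum_fiberwise univ G.tgt (fun e => (f e : ℤ)),
        Finset.sum_fiberwise univ G.src (fun e => (f e : ℤ))]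
      ring
    have hDzero : ∀ v ∈ (univ : Finset V), v ∉ ({s, t} : Finset V) → D v = 0 := by
      intro v _ hv
      simp only [Finset.mem_insert, Finset.mem_singleton] at hv
      push_neg at hv
      simp only [hD]
      rw [hZcons v hv.1 hv.2]
      ring
    have hpair : D s + D t = 0 := by
      rw [← Finset.sum_pair hst, Finset.sum_subset (Finset.subset_univ _) hDzero, hDsum]
    have hDs : D s = -(N : ℤ) := by
      have hflow := hval
      rw [Digraph'.flowValue] at hflow
      simp only [hD]
      rw [hN]
      push_cast
      linarith
    have hDt : D t = (N : ℤ) := by linarith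
    simp only [hD] at hDt
    linarith
  have hcirc : FlowSplit.Circ src' tgt' h' := by
    intro v
    have hZ : ((FlowSplit.inS tgt' h' v : ℕ) : ℤ) = ((FlowSplit.inS src' h' v : ℕ) : ℤ) := by
      rw [FlowSplit.inS, FlowSplit.inS, hsrc', htgt', hh']
      rw [split, split]
      simp only [Sum.elim_inl, Sum.elim_inr]
      rw [Finset.sum_const, Finset.card_univ, Fintype.card_fin, smul_eq_mul, mul_one]
      by_cases hvs : v = s
      · subst hvs
        rw [if_pos rfl, if_neg (fun h => hst h.symm)]
        push_cast
        linarith [hss]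
      · by_cases hvt : v = t
        · subst hvt
          rw [if_neg (fun h => hst h), if_pos rfl]
          push_cast
          linarith [hts]
        · rw [if_neg (fun h => hvs h.symm), if_neg (fun h => hvt h.symm)]
          push_cast
          rw [hZcons v hvs hvt]
    exact_mod_cast hZ
  have hbound : ∀ x, h' x ≤ lam + 1 := by
    intro x
    cases x with
    | inl e => simpa [hh'] using fall e
    | inr j => simp [hh']
  obtain ⟨g, hg1, hg2, hg3⟩ := FlowSplit.decomp (lam + 1) h' hcirc hbound
  set F : Fin (lam + 1) → E → ℕ := fun j e => g j (Sum.inl e) with hF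
  have hflowj : ∀ j, G.IsFlow s t (F j) := by
    intro j
    constructor
    · intro e; exact hg1 j (Sum.inl e)
    · intro v hvs hvt
      have hcj := hg2 j v
      rw [FlowSplit.inS, FlowSplit.inS, hsrc', htgt', split, split] at hcj
      rw [if_neg (fun h => hvs h.symm), if_neg (fun h => hvt h.symm)] at hcj
      simpa [hF] using hcj
  have hsum : ∀ e, f e = ∑ j, F j e := by
    intro e
    have := hg3 (Sum.inl e)
    simpa [hh', hF] using this
  have hle : ∀ j, G.flowValue s (F j) ≤ (lam : ℤ) := fun j => hmax.2 (F j) (hflowj j) (by simp)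
  have hswap : ∀ d : E → V, ∑ j : Fin (lam+1), ∑ e ∈ univ.filter (fun e => d e = s), ((F j e : ℕ) : ℤ)
      = ∑ e ∈ univ.filter (fun e => d e = s), ((f e : ℕ) : ℤ) := by
    intro d
    rw [Finset.sum_comm]
    apply Finset.sum_congr rfl
    intro e _
    rw [hsum e]
    push_cast
    ring
  have hsumval : ∑ j : Fin (lam+1), G.flowValue s (F j) = G.flowValue s f := by
    simp only [Digraph'.flowValue]
    rw [Finset.sum_sub_distrib, hswap G.src, hswap G.tgt]
  have hveq : ∀ j, G.flowValue s (F j) = (lam : ℤ) := by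
    have htot : ∑ j : Fin (lam+1), G.flowValue s (F j) = ∑ _j : Fin (lam+1), (lam : ℤ) := by
      rw [hsumval, hval, Finset.sum_const, Finset.card_univ, Fintype.card_fin]
      push_cast
      ring
    intro j
    exact (Finset.sum_eq_sum_iff_of_le (fun i _ => hle i)).mp htot j (Finset.mem_univ j)
  exact ⟨F, fun j => ⟨hflowj j, hveq j⟩, hsum⟩
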